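/- Adding a good addable i-node to a partition λ yields an e-regular partition whenever λ is e-regular. Consequently, any partition obtained from the empty partition by a sequence of Kashiwara operators f̃_{i_1}, ..., f̃_{i_n} (for residues modulo e) is e-regular. -/

import Mathlib

structure YPartition where
  parts : ℕ → ℕ
  antitone : Antitone parts
  finite : ∃ N, parts N = 0

def emptyP : YPartition := ⟨fun _ => 0, fun _ _ _ => le_rfl, ⟨0, rfl⟩⟩

/-- `l` is `e`-regular: no nonzero part is repeated `e` or more times. -/
def ERegular (e : ℕ) (l : YPartition) : Prop :=
  ¬ ∃ j, l.parts j ≠ 0 ∧ l.parts j = l.parts (j + e - 1)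
/-- there is a removable node at (the 0-indexed) row `a`, namely `(a, l.parts a - 1)`. -/
def RemovableRow (l : YPartition) (a : ℕ) : Prop := l.parts (a+1) < l.parts a

/-- there is an addable node at row `a`, namely `(a, l.parts a)`. -/
def AddableRow (l : YPartition) (a : ℕ) : Prop := a = 0 ∨ l.parts a < l.parts (a-1)

instance (l : YPartition) (a : ℕ) : Decidable (RemovableRow l a) :=
  inferInstanceAs (Decidable (_ < _))

instance (l : YPartition) (a : ℕ) : Decidable (AddableRow l a) :=
  inferInstanceAs (Decidable (_ ∨ _))

/-- residue of the removable node at row `a` (0-indexed cell `(a, parts a - 1)`). -/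
def remRes (e : ℕ) (l : YPartition) (a : ℕ) : ZMod e := (((l.parts a : ℤ) - 1 - (a : ℤ)) : ℤ)

/-- residue of the addable node at row `a` (0-indexed cell `(a, parts a)`). -/
def addRes (e : ℕ) (l : YPartition) (a : ℕ) : ZMod e := (((l.parts a : ℤ) - (a : ℤ)) : ℤ)

/-- the reading word of addable/removable `i`-nodes, from bottom row to top row;
`true` encodes the letter `A` (addable), `false` encodes `R` (removable);
each letter is recorded together with its row. `N` is any bound with `l.parts N = 0`. -/
def word1 (e : ℕ) (i : ZMod e) (l : YPartition) (N : ℕ) : List (Bool × ℕ) :=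
  ((List.range (N+2)).reverse).flatMap (fun a =>
    (if RemovableRow l a ∧ remRes e l a = i then [(false, a)] else []) ++
    (if AddableRow l a ∧ addRes e l a = i then [(true, a)] else []))

/-- recursively delete adjacent `RA` factors (`f` extracts the letter, `true = A`). -/
def reduceWord {α : Type} (f : α → Bool) : List α → List α
  | [] => []
  | x :: xs =>
    match reduceWord f xs with
    | [] => [x]
    | y :: t => if f x = false ∧ f y = true then t else x :: y :: t

/-- row of the good addable `i`-node: the rightmost `A` of the reduced word. -/
def goodAddRow (e : ℕ) (i : ZMod e) (l : YPartition) (N : ℕ) : Option ℕ :=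
  ((reduceWord Prod.fst (word1 e i l N)).reverse.find? (fun x => x.1)).map Prod.snd

/-- row of the good removable `i`-node: the leftmost `R` of the reduced word. -/
def goodRemRow (e : ℕ) (i : ZMod e) (l : YPartition) (N : ℕ) : Option ℕ :=
  ((reduceWord Prod.fst (word1 e i l N)).find? (fun x => !x.1)).map Prod.snd

/-- one step of the Kashiwara operator `f̃_i` : add the good addable `i`-node. -/
def FStep1 (e : ℕ) (i : ZMod e) (P Q : YPartition) : Prop :=
  ∃ a N, P.parts N = 0 ∧ goodAddRow e i P N = some a ∧
    Q.parts = Function.update P.parts a (P.parts a + 1)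


section Aux

lemma reduceWord_cons_nil {α : Type} {f : α → Bool} {xs : List α} (x : α)
    (h : reduceWord f xs = []) : reduceWord f (x :: xs) = [x] := by
  rw [reduceWord, h]

lemma reduceWord_cons_cons {α : Type} {f : α → Bool} {xs t : List α} {y : α} (x : α)
    (h : reduceWord f xs = y :: t) :
    reduceWord f (x :: xs) = if f x = false ∧ f y = true then t else x :: y :: t := by
  rw [reduceWord, h]

lemma reduceWord_sublist {α : Type} (f : α → Bool) : ∀ l : List α, (reduceWord f l).Sublist l
  | [] => List.Sublist.refl _
  | x :: xs => by
    have ih := reduceWord_sublist f xs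
    rcases h : reduceWord f xs with _ | ⟨y, t⟩
    · rw [reduceWord_cons_nil x h]
      simp
    · rw [h] at ih
      rw [reduceWord_cons_cons x h]
      split
      · exact ((List.sublist_cons_self y t).trans ih).trans (List.sublist_cons_self x xs)
      · exact ih.cons₂ x

lemma reduceWord_cons_true {α : Type} (f : α → Bool) (x : α) (hx : f x = true) (xs : List α) :
    reduceWord f (x :: xs) = x :: reduceWord f xs := by
  rcases h : reduceWord f xs with _ | ⟨y, t⟩
  · rw [reduceWord_cons_nil x h]
  · rw [reduceWord_cons_cons x h]
    simp [hx]

lemma reduceWord_append {α : Type} (f : α → Bool) (u w : List α) :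
    ∃ u' s, reduceWord f (u ++ w) = u' ++ s ∧ s <:+ reduceWord f w ∧ ∀ x ∈ u', x ∈ u := by
  induction u with
  | nil => exact ⟨[], reduceWord f w, rfl, List.suffix_refl _, by simp⟩
  | cons x u ih =>
    obtain ⟨u', s, heq, hs, hmem⟩ := ih
    have hmem' : ∀ z ∈ u', z ∈ x :: u := fun z hz => List.mem_cons_of_mem x (hmem z hz)
    rw [List.cons_append]
    rcases u' with _ | ⟨z, u''⟩
    · simp only [List.nil_append] at heq
      rcases s with _ | ⟨y, t⟩
      · exact ⟨[x], [], by simp [reduceWord_cons_nil x heq],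
          List.nil_suffix, by simp⟩
      · rw [reduceWord_cons_cons x heq]
        split
        · exact ⟨[], t, by simp, ((List.suffix_cons y t).trans hs), by simp⟩
        · exact ⟨[x], y :: t, rfl, hs, by simp⟩
    · rw [reduceWord_cons_cons x (by simpa using heq)]
      split
      · exact ⟨u'', s, rfl, hs, fun z' hz' => hmem' z' (List.mem_cons_of_mem z hz')⟩
      · refine ⟨x :: z :: u'', s, by simp, hs, fun z' hz' => ?_⟩
        rcases List.mem_cons.1 hz' with h | hz'
        · exact h ▸ List.mem_cons_self
        · exact hmem' z' hz'

lemma mem_word1 {e : ℕ} {i : ZMod e} {l : YPartition} {N : ℕ} {x : Bool × ℕ}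
    (h : x ∈ word1 e i l N) :
    (x.1 = true → AddableRow l x.2 ∧ addRes e l x.2 = i) ∧
    (x.1 = false → RemovableRow l x.2 ∧ remRes e l x.2 = i) := by
  unfold word1 at h
  obtain ⟨r, _, hx⟩ := List.mem_flatMap.1 h
  rcases List.mem_append.1 hx with h1 | h1
  · split_ifs at h1 with hcond
    · simp only [List.mem_singleton] at h1
      subst h1
      exact ⟨by simp, fun _ => hcond⟩
    · simp at h1
  · split_ifs at h1 with hcond
    · simp only [List.mem_singleton] at h1
      subst h1
      exact ⟨fun _ => hcond, by simp⟩
    · simp at h1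

lemma key_lemma (e : ℕ) (he : 1 < e) (i : ZMod e) (l m : YPartition) (N a : ℕ)
    (hN : l.parts N = 0) (hreg : ERegular e l)
    (hgood : goodAddRow e i l N = some a)
    (hm : m.parts = Function.update l.parts a (l.parts a + 1)) :
    ERegular e m := by
  rintro ⟨j, hj0, hje⟩
  set c := m.parts j with hc
  have hoff : ∀ r, r ≠ a → m.parts r = l.parts r := by
    intro r hr; rw [hm, Function.update_of_ne hr]
  have hma : m.parts a = l.parts a + 1 := by rw [hm, Function.update_self]
  have hconst : ∀ r, j ≤ r → r ≤ j + e - 1 → m.parts r = c := by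
    intro r h1 h2
    exact le_antisymm (m.antitone h1) (hje ▸ m.antitone h2)
  -- extract information from goodAddRow
  obtain ⟨y, hy1, hy2⟩ := Option.map_eq_some_iff.1 hgood
  have hyt : y.1 = true := by simpa using List.find?_some hy1
  have hymem : y ∈ reduceWord Prod.fst (word1 e i l N) :=
    List.mem_reverse.1 (List.mem_of_find?_eq_some hy1)
  have hyw : y ∈ word1 e i l N := (reduceWord_sublist _ _).mem hymem
  obtain ⟨hAa, hi⟩ : AddableRow l a ∧ addRes e l a = i := by
    rw [← hy2]; exact (mem_word1 hyw).1 hyt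
  -- a must be inside the window
  have hain : j ≤ a ∧ a ≤ j + e - 1 := by
    by_contra hne
    have h1 : j ≠ a := fun h => hne (by omega)
    have h2 : j + e - 1 ≠ a := fun h => hne (by omega)
    exact hreg ⟨j, by rw [← hoff j h1]; exact hj0,
      by rw [← hoff j h1, ← hoff _ h2]; exact hje⟩
  obtain ⟨hja, haj⟩ := hain
  have hc1 : 1 ≤ c := Nat.pos_of_ne_zero hj0
  have hla : l.parts a + 1 = c := by rw [← hma]; exact hconst a hja haj
  have ha_eq : a = j + e - 1 := by
    by_contra hne
    have h2 : a + 1 ≠ a := by omega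
    have h3 : l.parts (a+1) = c := by
      rw [← hoff _ h2]; exact hconst _ (by omega) (by omega)
    have h4 : l.parts (a+1) ≤ l.parts a := l.antitone (by omega)
    omega
  have hja' : j < a := by omega
  have hl : ∀ r, j ≤ r → r < a → l.parts r = c := by
    intro r h1 h2
    rw [← hoff r (by omega)]; exact hconst r h1 (by omega)
  -- row j is addable
  have hAj : AddableRow l j := by
    rcases Nat.eq_zero_or_pos j with h0 | h0
    · exact Or.inl h0
    · right
      have h1 : l.parts j = c := hl j le_rfl hja'
      have h2 : l.parts j ≤ l.parts (j-1) := l.antitone (by omega)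
      rcases lt_or_eq_of_le h2 with h | h
      · exact h
      · exfalso
        apply hreg
        refine ⟨j-1, ?_, ?_⟩
        · rw [← h, h1]; omega
        · rw [show j - 1 + e - 1 = a - 1 by omega, ← h, h1,
            hl (a-1) (by omega) (by omega)]
  -- bounds
  have hjN : j < N := by
    by_contra h
    push_neg at h
    have h1 := l.antitone h
    have h2 := hl j le_rfl hja'
    omega
  have haN : a ≤ N := by
    have h1 : l.parts (a-1) = c := hl (a-1) (by omega) (by omega)
    by_contra h
    push_neg at h
    have h2 := l.antitone (show N ≤ a - 1 by omega)
    omega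
  -- modular arithmetic helpers
  have hcast : ∀ x y : ℤ, (e:ℤ) ∣ (x - y) → ((x : ZMod e) = (y : ZMod e)) := by
    intro x y h
    have h2 := (ZMod.intCast_zmod_eq_zero_iff_dvd (x-y) e).2 h
    push_cast at h2
    exact sub_eq_zero.1 h2
  have hncast : ∀ x y : ℤ, ¬ (e:ℤ) ∣ (x - y) → ((x : ZMod e) ≠ (y : ZMod e)) := by
    intro x y h hxy
    apply h
    apply (ZMod.intCast_zmod_eq_zero_iff_dvd (x-y) e).1
    push_cast
    rw [hxy, sub_self]
  have hd1 : ¬ (e:ℤ) ∣ (-1 : ℤ) := by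
    intro h
    have := Int.le_of_dvd one_pos (dvd_neg.1 h)
    omega
  have hd2 : ¬ (e:ℤ) ∣ (1 : ℤ) := by
    intro h
    have := Int.le_of_dvd one_pos h
    omega
  have hd3 : ¬ (e:ℤ) ∣ ((e:ℤ) - 1) := by
    intro h
    have := Int.le_of_dvd (by omega) h
    omega
  have hia : (l.parts a : ℤ) = (c:ℤ) - 1 := by omega
  have hza : (a : ℤ) = (j : ℤ) + e - 1 := by omega
  have hi' : i = ((((c : ℤ) - j - e : ℤ)) : ZMod e) := by
    rw [← hi]
    exact congrArg (fun z : ℤ => (z : ZMod e))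
      (show (l.parts a : ℤ) - (a:ℤ) = ((c:ℤ) - j - e : ℤ) by omega)
  -- values of the letter-generating function
  set g : ℕ → List (Bool × ℕ) := fun r =>
    (if RemovableRow l r ∧ remRes e l r = i then [(false, r)] else []) ++
    (if AddableRow l r ∧ addRes e l r = i then [(true, r)] else []) with hg
  have hw0 : word1 e i l N = ((List.range (N+2)).reverse).flatMap g := by
    rw [hg]; rfl
  have hga : g a = [(true, a)] := by
    have hr : remRes e l a = ((((c:ℤ) - j - e - 1 : ℤ)) : ZMod e) :=
      congrArg (fun z : ℤ => (z : ZMod e))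
        (show (l.parts a : ℤ) - 1 - (a:ℤ) = ((c:ℤ) - j - e - 1 : ℤ) by omega)
    have h1 : remRes e l a ≠ i := by
      rw [hi', hr]
      refine hncast _ _ ?_
      rw [show ((c:ℤ) - j - e - 1 : ℤ) - ((c:ℤ) - j - e : ℤ) = -1 by ring]
      exact hd1
    simp [hg, h1, hAa, hi]
  have hgj : g j = [(true, j)] := by
    have hpj : l.parts j = c := hl j le_rfl hja'
    have hr : remRes e l j = ((((c:ℤ) - 1 - j : ℤ)) : ZMod e) :=
      congrArg (fun z : ℤ => (z : ZMod e))
        (show (l.parts j : ℤ) - 1 - (j:ℤ) = ((c:ℤ) - 1 - j : ℤ) by omega)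
    have h1 : remRes e l j ≠ i := by
      rw [hi', hr]
      refine hncast _ _ ?_
      rw [show ((c:ℤ) - 1 - j : ℤ) - ((c:ℤ) - j - e : ℤ) = (e:ℤ) - 1 by ring]
      exact hd3
    have h2 : addRes e l j = i := by
      rw [hi']
      have ha2 : addRes e l j = ((((c:ℤ) - j : ℤ)) : ZMod e) :=
        congrArg (fun z : ℤ => (z : ZMod e))
          (show (l.parts j : ℤ) - (j:ℤ) = ((c:ℤ) - j : ℤ) by omega)
      rw [ha2]
      exact hcast _ _ (by rw [show ((c:ℤ) - j : ℤ) - ((c:ℤ) - j - e : ℤ) = (e:ℤ) by ring])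
    simp [hg, h1, hAj, h2]
  have hmid : ∀ r, j < r → r < a → g r = [] := by
    intro r h1 h2
    have hpr : l.parts r = c := hl r (by omega) h2
    have hnA : ¬ AddableRow l r := by
      rintro (h0 | h0)
      · omega
      · have h3 : l.parts (r-1) = c := hl (r-1) (by omega) (by omega)
        omega
    have hnR : ¬ (RemovableRow l r ∧ remRes e l r = i) := by
      rintro ⟨hR, hres⟩
      unfold RemovableRow at hR
      rcases Nat.lt_or_ge (r+1) a with hr1 | hr1
      · have h3 : l.parts (r+1) = c := hl (r+1) (by omega) hr1
        omega
      · have hr2 : r + 1 = a := by omega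
        have hrr : remRes e l r = ((((c:ℤ) - j - e + 1 : ℤ)) : ZMod e) :=
          congrArg (fun z : ℤ => (z : ZMod e))
            (show (l.parts r : ℤ) - 1 - (r:ℤ) = ((c:ℤ) - j - e + 1 : ℤ) by omega)
        apply hncast ((c:ℤ) - j - e + 1 : ℤ) ((c:ℤ) - j - e : ℤ) ?_ ?_
        · rw [show ((c:ℤ) - j - e + 1 : ℤ) - ((c:ℤ) - j - e : ℤ) = 1 by ring]
          exact hd2
        · rw [← hrr, ← hi']
          exact hres
    simp [hg, hnR, hnA]
  have hmid0 : ((List.range' (j+1) (a-(j+1))).reverse).flatMap g = [] := by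
    rw [List.flatMap_eq_nil_iff]
    intro r hr
    rw [List.mem_reverse, List.mem_range'_1] at hr
    exact hmid r (by omega) (by omega)
  -- split the range
  have hsplit : List.range (N+2) =
      List.range j ++ (j :: (List.range' (j+1) (a-(j+1)) ++ (a :: List.range' (a+1) (N+1-a)))) := by
    have hr2 : List.range' a (N+2-a) = a :: List.range' (a+1) (N+1-a) := by
      rw [show N+2-a = (N+1-a)+1 by omega, List.range'_succ]
    have hr3 : List.range' (j+1) (N+1-j) =
        List.range' (j+1) (a-(j+1)) ++ List.range' a (N+2-a) := by
      have h := List.range'_append (s := j+1) (m := a-(j+1)) (n := N+2-a) (step := 1)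
      rw [show (j+1)+1*(a-(j+1)) = a by omega, show (a-(j+1))+(N+2-a) = N+1-j by omega] at h
      exact h.symm
    have hr1 : List.range' j (N+2-j) = j :: List.range' (j+1) (N+1-j) := by
      rw [show N+2-j = (N+1-j)+1 by omega, List.range'_succ]
    have hr0 : List.range (N+2) = List.range j ++ List.range' j (N+2-j) := by
      rw [List.range_eq_range', List.range_eq_range']
      have h := List.range'_append (s := 0) (m := j) (n := N+2-j) (step := 1)
      rw [show 0+1*j = j by omega, show j+(N+2-j) = N+2 by omega] at h
      exact h.symm
    rw [hr0, hr1, hr3, hr2]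
  set U : List (Bool × ℕ) := ((List.range' (a+1) (N+1-a)).reverse).flatMap g with hU
  set V : List (Bool × ℕ) := ((List.range j).reverse).flatMap g with hV
  have hword : word1 e i l N = U ++ ((true,a) :: (true,j) :: V) := by
    rw [hw0, hsplit]
    simp only [List.reverse_append, List.reverse_cons, List.flatMap_append,
      List.flatMap_cons, List.flatMap_nil, List.append_assoc, List.append_nil,
      List.nil_append, List.singleton_append, List.cons_append,
      hga, hgj, hmid0, hU, hV]
  -- snd bounds for letters
  have hgsnd : ∀ r (x : Bool × ℕ), x ∈ g r → x.2 = r := by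
    intro r x hx
    rw [hg] at hx
    rcases List.mem_append.1 hx with h | h <;> split_ifs at h <;>
      first
        | exact absurd h List.not_mem_nil
        | (simp only [List.mem_singleton] at h; simp [h])
  have hUb : ∀ x ∈ U, a < x.2 := by
    intro x hx
    obtain ⟨r, hr, hxr⟩ := List.mem_flatMap.1 hx
    rw [List.mem_reverse, List.mem_range'_1] at hr
    have := hgsnd r x hxr
    omega
  have hVb : ∀ x ∈ V, x.2 < j := by
    intro x hx
    obtain ⟨r, hr, hxr⟩ := List.mem_flatMap.1 hx
    rw [List.mem_reverse, List.mem_range] at hr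
    have := hgsnd r x hxr
    omega
  -- analyse the reduced word
  obtain ⟨u', s, hred, hsuf, hu'⟩ := reduceWord_append Prod.fst U ((true,a) :: (true,j) :: V)
  rw [reduceWord_cons_true _ _ rfl, reduceWord_cons_true _ _ rfl] at hsuf
  have hreduced : reduceWord Prod.fst (word1 e i l N) = u' ++ s := by
    rw [hword]; exact hred
  set rv := reduceWord Prod.fst V with hrv
  rcases List.suffix_cons_iff.1 hsuf with hcase | hcase
  · -- s is the whole thing; find? from the right hits (true,j) or something in rv
    have hrev : (reduceWord Prod.fst (word1 e i l N)).reverse =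
        rv.reverse ++ ((true,j) :: ((true,a) :: u'.reverse)) := by
      rw [hreduced, hcase]; simp
    rw [hrev, List.find?_append] at hy1
    rcases hor : List.find? (fun x => x.1) rv.reverse with _ | z
    · rw [hor, Option.none_or, List.find?_cons_of_pos rfl] at hy1
      have : y = (true, j) := by exact Option.some.inj hy1.symm
      rw [this] at hy2
      simp at hy2
      omega
    · rw [hor] at hy1
      have hyz : y = z := by
        have : (some z).or (List.find? (fun x => x.1) ((true,j) :: (true,a) :: u'.reverse)) = some z := rfl
        rw [this] at hy1
        exact Option.some.inj hy1.symm
      have hzmem : z ∈ rv := List.mem_reverse.1 (List.mem_of_find?_eq_some hor)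
      have hzV : z ∈ V := (reduceWord_sublist _ V).mem hzmem
      have := hVb z hzV
      rw [hyz] at hy2
      omega
  · -- s misses (true,a); no letter of the reduced word has row a
    have hys : y ∈ u' ++ s := by rw [← hreduced]; exact hymem
    rcases List.mem_append.1 hys with h | h
    · have := hUb y (hu' y h)
      omega
    · have hy3 : y ∈ (true,j) :: rv := hcase.sublist.mem h
      rcases List.mem_cons.1 hy3 with h' | h'
      · rw [h'] at hy2; simp at hy2; omega
      · have := hVb y ((reduceWord_sublist _ V).mem h')
        omega

end Aux

/-- adding a good addable `i`-node preserves `e`-regularity; consequently,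
any partition obtained from the empty partition by a sequence of Kashiwara operators
`f̃` is `e`-regular. -/
theorem stmt_3 (e : ℕ) (he : 1 < e) :
    (∀ (i : ZMod e) (l m : YPartition) (N a : ℕ), l.parts N = 0 → ERegular e l →
      goodAddRow e i l N = some a →
      m.parts = Function.update l.parts a (l.parts a + 1) →
      ERegular e m) ∧
    (∀ l : YPartition,
      Relation.ReflTransGen (fun P Q => ∃ i : ZMod e, FStep1 e i P Q) emptyP l →
      ERegular e l) := by
  constructor
  · intro i l m N a hN hreg hgood hm
    exact key_lemma e he i l m N a hN hreg hgood hm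
  · intro l h
    induction h with
    | refl => rintro ⟨j, hj, _⟩; exact hj rfl
    | tail _ hstep ih =>
      obtain ⟨i, a, N, hN, hg, hq⟩ := hstep
      exact key_lemma e he i _ _ N a hN ih hg hq
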